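/- Representation theorem for equivariant maps: Let n ≥ m and let F : ℝ^{n^ℓ × a} → ℝ^{n^m × b} be a continuous S_n-equivariant map. Then there exist continuous maps F_T : ℝ^{n^ℓ × a} → ℝ^b, indexed by basis tableaux T of {1,…,m} of depth D (1 ≤ D ≤ m), such that F(x) = ∑_{D=1}^{m} ∑_{T ∈ T_{m,D}} (1/|H_D|) ∑_{g ∈ H_D} g⁻¹ · (F_T(g · x) ⊗ e_T), where e_T ∈ ℝ^{n^m} is the basis tableau vector assigning value d to the positions in the d-th row of T, and H_D = {σ_D ⋯ σ_1 : σ_i ∈ C_{n-D+i}} with C_{n-i} the cyclic group of order n-i on {i+1,…,n}. -/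

import Mathlib

/-- The equivalence between `Fin (n - i)` and the elements of `Fin n` that are `≥ i`. -/
def shiftEquiv (n i : ℕ) : Fin (n - i) ≃ {j : Fin n // i ≤ (j : ℕ)} where
  toFun k := ⟨⟨i + k.val, by omega⟩, by simp⟩
  invFun j := ⟨(j : Fin n).val - i, by omega⟩
  left_inv k := by ext; simp
  right_inv j := by
    apply Subtype.ext
    apply Fin.ext
    have := j.2
    simp
    omega

/-- The cyclic permutation of order `n - i` on the elements of `Fin n` that are
`≥ i`, fixing the others.  Its powers form the cyclic group `C_{n-i}`. -/
def cyc (n i : ℕ) : Equiv.Perm (Fin n) :=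
  (finRotate (n - i)).extendDomain (shiftEquiv n i)

/-- `H_D = {σ_D ⋯ σ_1 : σ_i ∈ C_{n-D+i}}`, the set of products of one element
of each cyclic group `C_n, C_{n-1}, …, C_{n-D+1}` (the `C_n`-factor applied
first). -/
def HD (n D : ℕ) : Set (Equiv.Perm (Fin n)) :=
  {g | ∃ σ : Fin D → Equiv.Perm (Fin n),
    (∀ d : Fin D, σ d ∈ Subgroup.zpowers (cyc n d.val)) ∧
      g = (List.ofFn σ).reverse.prod}

/-- `H_D` as a finset. -/
noncomputable def HDfin (n D : ℕ) : Finset (Equiv.Perm (Fin n)) :=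
  (Set.toFinite (HD n D)).toFinset

/-- A basis tableau of depth `D` for `m` (rows encoded as `Finset`s, each row
read in increasing order): rows are nonempty, partition `{1,…,m}`, have weakly
decreasing lengths, and consecutive rows of equal length have increasing first
(minimal) entries. -/
def IsBasisTableau {m D : ℕ} (rows : Fin D → Finset (Fin m)) : Prop :=
  (∀ d, (rows d).Nonempty) ∧
  (∀ ℓ : Fin m, ∃! d, ℓ ∈ rows d) ∧
  (∀ d d' : Fin D, d ≤ d' → (rows d').card ≤ (rows d).card) ∧
  (∀ (d : Fin D) (h : d.val + 1 < D),
    (rows d).card = (rows ⟨d.val + 1, h⟩).card →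
      (rows d).min < (rows ⟨d.val + 1, h⟩).min)

/-- The finset of basis tableaux of depth `D` for `m`. -/
noncomputable def TabFin (m D : ℕ) : Finset (Fin D → Finset (Fin m)) :=
  (Set.toFinite {rows | IsBasisTableau rows}).toFinset

/-- The index tuple `u_T ∈ [n]^m` of a basis tableau `T`: `u_ℓ = d` when `ℓ`
lies in row `d` of `T` (for an actual basis tableau with depth `D ≤ n`, the
`% n` is the identity). -/
noncomputable def uT (n : ℕ) {m D : ℕ} (hn : 0 < n) (rows : Fin D → Finset (Fin m)) :
    Fin m → Fin n :=
  fun ℓ =>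
    if h : ∃ d, ℓ ∈ rows d then ⟨(Classical.choose h).val % n, Nat.mod_lt _ hn⟩
    else ⟨0, hn⟩

/-- `v ⊗ e_u ∈ ℝ^{n^m × b}` for `v ∈ ℝ^b` and a basis vector index `u ∈ [n]^m`. -/
def vTensor {n m b : ℕ} (v : Fin b → ℝ) (u : Fin m → Fin n) :
    ((Fin m → Fin n) × Fin b) → ℝ :=
  fun q => (if q.1 = u then 1 else 0) * v q.2

/-- The action of `S_n` on `ℝ^{n^ℓ × a}` (as functions `((Fin ℓ → Fin n) × Fin a) → ℝ`),
permuting each tensor index: `(g • X)_{i_1…i_ℓ, α} = X_{g⁻¹(i_1)…g⁻¹(i_ℓ), α}`. -/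
def tensorAct {n l a : ℕ} (g : Equiv.Perm (Fin n))
    (x : ((Fin l → Fin n) × Fin a) → ℝ) : ((Fin l → Fin n) × Fin a) → ℝ :=
  fun p => x (fun k => g⁻¹ (p.1 k), p.2)


set_option maxHeartbeats 1000000

lemma finRotate_pow_apply (N k : ℕ) (hN : 0 < N) (i : Fin N) :
    ((finRotate N) ^ k) i = ⟨(i.val + k) % N, Nat.mod_lt _ hN⟩ := by
  obtain ⟨M, rfl⟩ : ∃ M, N = M + 1 := ⟨N - 1, by omega⟩
  induction k with
  | zero => simp [Nat.mod_eq_of_lt i.isLt]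
  | succ k ih =>
    rw [pow_succ', Equiv.Perm.mul_apply, ih, finRotate_succ_apply]
    apply Fin.ext
    show ((i.val + k) % (M+1) + (1 : Fin (M+1)).val) % (M+1) = (i.val + (k+1)) % (M+1)
    rw [Fin.val_one' (M+1), ← Nat.add_mod, ← add_assoc]

lemma cyc_pow_apply {n d : ℕ} (hd : d < n) (k : ℕ) (j : Fin n) (hj : d ≤ j.val) :
    ((cyc n d) ^ k) j = ⟨d + (j.val - d + k) % (n - d), by
      have := Nat.mod_lt (j.val - d + k) (y := n - d) (by omega); omega⟩ := by
  have h1 : (cyc n d) ^ k = ((finRotate (n-d)) ^ k).extendDomain (shiftEquiv n d) := by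
    rw [cyc, Equiv.Perm.extendDomain_pow]
  have h2 := Equiv.Perm.extendDomain_apply_subtype (e := (finRotate (n-d))^k) (f := shiftEquiv n d) hj
  rw [h1, h2]
  have h3 : (shiftEquiv n d).symm ⟨j, hj⟩ = ⟨j.val - d, by omega⟩ := rfl
  rw [h3, finRotate_pow_apply _ _ (by omega)]
  rfl

lemma cyc_pow_fix {n d : ℕ} (k : ℕ) (j : Fin n) (hj : j.val < d) :
    ((cyc n d) ^ k) j = j := by
  have h1 : (cyc n d) ^ k = ((finRotate (n-d)) ^ k).extendDomain (shiftEquiv n d) := by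
    rw [cyc, Equiv.Perm.extendDomain_pow]
  have h2 := Equiv.Perm.extendDomain_apply_not_subtype (e := (finRotate (n-d))^k) (f := shiftEquiv n d) (b := j) (by omega : ¬ d ≤ (j:ℕ))
  rw [h1, h2]

lemma mem_zpowers_cyc {n d : ℕ} {σ : Equiv.Perm (Fin n)}
    (h : σ ∈ Subgroup.zpowers (cyc n d)) : ∃ k : ℕ, σ = (cyc n d) ^ k := by
  rw [← mem_powers_iff_mem_zpowers, Submonoid.mem_powers_iff] at h
  obtain ⟨k, hk⟩ := h
  exact ⟨k, hk.symm⟩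

lemma cyc_zpowers_fix {n d : ℕ} {σ : Equiv.Perm (Fin n)}
    (h : σ ∈ Subgroup.zpowers (cyc n d)) {j : Fin n} (hj : j.val < d) : σ j = j := by
  obtain ⟨k, rfl⟩ := mem_zpowers_cyc h
  exact cyc_pow_fix k j hj

lemma cyc_zpowers_le {n d : ℕ} {σ : Equiv.Perm (Fin n)}
    (h : σ ∈ Subgroup.zpowers (cyc n d)) {j : Fin n} (hj : d ≤ j.val) : d ≤ (σ j).val := by
  obtain ⟨k, rfl⟩ := mem_zpowers_cyc h
  have hd : d < n := lt_of_le_of_lt hj j.isLt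
  rw [cyc_pow_apply hd k j hj]
  simp

lemma cyc_exists {n d : ℕ} (hd : d < n) (t : Fin n) (ht : d ≤ t.val) :
    ∃ σ ∈ Subgroup.zpowers (cyc n d), σ t = ⟨d, hd⟩ := by
  refine ⟨(cyc n d) ^ (n - t.val), Subgroup.npow_mem_zpowers _ _, ?_⟩
  rw [cyc_pow_apply hd _ t ht]
  apply Fin.ext
  have h0 : t.val - d + (n - t.val) = n - d := by omega
  simp [h0, Nat.mod_self]

lemma cyc_unique {n d : ℕ} {σ σ' : Equiv.Perm (Fin n)}
    (h : σ ∈ Subgroup.zpowers (cyc n d)) (h' : σ' ∈ Subgroup.zpowers (cyc n d))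
    {a : Fin n} (ha : d ≤ a.val) (heq : σ a = σ' a) : σ = σ' := by
  obtain ⟨k, rfl⟩ := mem_zpowers_cyc h
  obtain ⟨k', rfl⟩ := mem_zpowers_cyc h'
  have hd : d < n := lt_of_le_of_lt ha a.isLt
  rw [cyc_pow_apply hd k a ha, cyc_pow_apply hd k' a ha, Fin.mk.injEq] at heq
  have hmod : k ≡ k' [MOD n - d] := by
    have : a.val - d + k ≡ a.val - d + k' [MOD n - d] := by
      unfold Nat.ModEq; omega
    exact Nat.ModEq.add_left_cancel' _ this
  ext j
  rcases lt_or_ge j.val d with hj | hj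
  · rw [cyc_pow_fix k j hj, cyc_pow_fix k' j hj]
  · rw [cyc_pow_apply hd k j hj, cyc_pow_apply hd k' j hj]
    simp only [Fin.mk.injEq]
    have : j.val - d + k ≡ j.val - d + k' [MOD n - d] := Nat.ModEq.add_left _ hmod
    unfold Nat.ModEq at this
    omega

lemma HD_zero (n : ℕ) {g : Equiv.Perm (Fin n)} (h : g ∈ HD n 0) : g = 1 := by
  obtain ⟨σ, -, rfl⟩ := h
  simp

lemma one_mem_HD (n D : ℕ) : (1 : Equiv.Perm (Fin n)) ∈ HD n D := by
  refine ⟨fun _ => 1, fun d => Subgroup.one_mem _, ?_⟩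
  rw [List.prod_eq_one]
  intro x hx
  rw [List.mem_reverse] at hx
  obtain ⟨i, rfl⟩ := List.mem_ofFn.mp hx
  rfl

lemma mem_HD_succ {n D : ℕ} {g : Equiv.Perm (Fin n)} :
    g ∈ HD n (D+1) ↔ ∃ σ ∈ Subgroup.zpowers (cyc n D), ∃ h ∈ HD n D, g = σ * h := by
  constructor
  · rintro ⟨σ, hσ, rfl⟩
    refine ⟨σ (Fin.last D), hσ (Fin.last D), (List.ofFn (σ ∘ Fin.castSucc)).reverse.prod,
      ⟨σ ∘ Fin.castSucc, fun d => hσ d.castSucc, rfl⟩, ?_⟩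
    rw [List.ofFn_succ', List.concat_eq_append, List.reverse_append]
    simp [Function.comp_def]
  · rintro ⟨σD, hσD, h, ⟨σ, hσ, rfl⟩, rfl⟩
    refine ⟨Fin.snoc σ σD, ?_, ?_⟩
    · intro d
      refine Fin.lastCases ?_ ?_ d
      · simpa using hσD
      · intro i
        simpa using hσ i
    · rw [List.ofFn_succ', List.concat_eq_append, List.reverse_append]
      simp

lemma HD_unique {n : ℕ} : ∀ {D : ℕ} (_hDn : D ≤ n), ∀ {g g' : Equiv.Perm (Fin n)},
    g ∈ HD n D → g' ∈ HD n D →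
    (∀ d (hd : d < D), g⁻¹ ⟨d, by omega⟩ = g'⁻¹ ⟨d, by omega⟩) → g = g' := by
  intro D
  induction D with
  | zero => intro _ g g' hg hg' _; rw [HD_zero n hg, HD_zero n hg']
  | succ D ih =>
    intro hDn g g' hg hg' hagree
    obtain ⟨σ, hσ, h, hh, rfl⟩ := mem_HD_succ.mp hg
    obtain ⟨σ', hσ', h', hh', rfl⟩ := mem_HD_succ.mp hg'
    have key : ∀ (d : ℕ) (hd : d < n) (τ k : Equiv.Perm (Fin n)),
        (τ * k)⁻¹ ⟨d, hd⟩ = k⁻¹ (τ⁻¹ ⟨d, hd⟩) := by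
      intro d hd τ k
      rw [mul_inv_rev, Equiv.Perm.mul_apply]
    have fixlt : ∀ (d : ℕ) (hd : d < D) (hd' : d < n) (τ : Equiv.Perm (Fin n)),
        τ ∈ Subgroup.zpowers (cyc n D) → τ⁻¹ ⟨d, hd'⟩ = ⟨d, hd'⟩ :=
      fun d hd hd' τ hτ => cyc_zpowers_fix (Subgroup.inv_mem _ hτ) hd
    have hhh : h = h' := by
      apply ih (by omega) hh hh'
      intro d hd
      have e1 := hagree d (by omega)
      rw [key d (by omega) σ h, key d (by omega) σ' h',
        fixlt d hd (by omega) σ hσ, fixlt d hd (by omega) σ' hσ'] at e1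
      exact e1
    subst hhh
    have e2 := hagree D (by omega)
    rw [key D (by omega) σ h, key D (by omega) σ' h] at e2
    have e3 : σ⁻¹ ⟨D, by omega⟩ = σ'⁻¹ ⟨D, by omega⟩ := (Equiv.injective h⁻¹) e2
    have e4 : σ⁻¹ = σ'⁻¹ :=
      cyc_unique (Subgroup.inv_mem _ hσ) (Subgroup.inv_mem _ hσ')
        (a := ⟨D, by omega⟩) (le_refl D) e3
    rw [inv_inj] at e4
    rw [e4]

lemma HD_exists {n : ℕ} : ∀ {D : ℕ} (_hDn : D ≤ n) (v : Fin D → Fin n),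
    Function.Injective v →
    ∃ g ∈ HD n D, ∀ (d : ℕ) (hd : d < D), g⁻¹ ⟨d, by omega⟩ = v ⟨d, hd⟩ := by
  intro D
  induction D with
  | zero => intro _ v _; exact ⟨1, one_mem_HD n 0, fun d hd => by omega⟩
  | succ D ih =>
    intro hDn v hv
    obtain ⟨h, hh, hhspec⟩ := ih (by omega) (v ∘ Fin.castSucc) (hv.comp (Fin.castSucc_injective D))
    have hge : D ≤ (h (v (Fin.last D))).val := by
      by_contra hlt
      push_neg at hlt
      have heq1 : v (Fin.last D) = h⁻¹ ⟨(h (v (Fin.last D))).val, by omega⟩ := by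
        rw [Fin.eta, Equiv.Perm.inv_def, Equiv.symm_apply_apply]
      rw [hhspec _ hlt] at heq1
      have h4 := congrArg Fin.val (hv heq1)
      simp only [Fin.val_last, Fin.coe_castSucc] at h4
      omega
    obtain ⟨σ, hσ, hσspec⟩ := cyc_exists (d := D) (by omega) _ hge
    refine ⟨σ * h, mem_HD_succ.mpr ⟨σ, hσ, h, hh, rfl⟩, ?_⟩
    intro d hd
    rw [mul_inv_rev, Equiv.Perm.mul_apply]
    rcases Nat.lt_or_ge d D with hdD | hdD
    · rw [cyc_zpowers_fix (Subgroup.inv_mem _ hσ) hdD, hhspec d hdD]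
      rfl
    · have hdeq : d = D := by omega
      subst hdeq
      have hinv : σ⁻¹ ⟨d, by omega⟩ = h (v (Fin.last d)) := by
        rw [← hσspec, Equiv.Perm.inv_def, Equiv.symm_apply_apply]
      rw [hinv, Equiv.Perm.inv_def, Equiv.symm_apply_apply]
      rfl

section Tableau

variable {m n : ℕ}

def levelSet (u : Fin m → Fin n) (w : Fin n) : Finset (Fin m) :=
  Finset.univ.filter fun ℓ => u ℓ = w

lemma mem_levelSet {u : Fin m → Fin n} {w : Fin n} {ℓ : Fin m} :
    ℓ ∈ levelSet u w ↔ u ℓ = w := by simp [levelSet]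

def Pu (u : Fin m → Fin n) : Finset (Finset (Fin m)) :=
  (Finset.univ.image u).image (levelSet u)

lemma mem_Pu {u : Fin m → Fin n} {S : Finset (Fin m)} :
    S ∈ Pu u ↔ ∃ ℓ, S = levelSet u (u ℓ) := by
  simp only [Pu, Finset.mem_image, Finset.mem_univ, true_and]
  constructor
  · rintro ⟨w, ⟨ℓ, rfl⟩, rfl⟩; exact ⟨ℓ, rfl⟩
  · rintro ⟨ℓ, rfl⟩; exact ⟨u ℓ, ⟨ℓ, rfl⟩, rfl⟩

lemma Pu_nonempty {u : Fin m → Fin n} {S : Finset (Fin m)} (h : S ∈ Pu u) : S.Nonempty := by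
  obtain ⟨ℓ, rfl⟩ := mem_Pu.mp h
  exact ⟨ℓ, mem_levelSet.mpr rfl⟩

lemma Pu_eq_of_mem {u : Fin m → Fin n} {S : Finset (Fin m)} (h : S ∈ Pu u)
    {ℓ : Fin m} (hℓ : ℓ ∈ S) : S = levelSet u (u ℓ) := by
  obtain ⟨ℓ', rfl⟩ := mem_Pu.mp h
  rw [mem_levelSet] at hℓ
  rw [hℓ]

noncomputable def tkey (S : Finset (Fin m)) : ℕ :=
  (m - S.card) * m + (if h : S.Nonempty then (S.min' h).val else 0)

lemma tkey_of_nonempty {S : Finset (Fin m)} (h : S.Nonempty) :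
    tkey S = (m - S.card) * m + (S.min' h).val := by rw [tkey, dif_pos h]

lemma key_arith1 {m a b r s : ℕ} (hr : r < m) (hab : a < b) : a * m + r < b * m + s :=
  calc a * m + r < a * m + m := by omega
    _ = (a + 1) * m := by ring
    _ ≤ b * m := Nat.mul_le_mul_right m (by omega)
    _ ≤ b * m + s := Nat.le_add_right _ _

lemma min'_lt {S : Finset (Fin m)} (h : S.Nonempty) : (S.min' h).val < m := (S.min' h).isLt

lemma card_le_m {S : Finset (Fin m)} : S.card ≤ m := by
  simpa using Finset.card_le_univ S

lemma tkey_card_le {S S' : Finset (Fin m)} (hS : S.Nonempty) (hS' : S'.Nonempty)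
    (h : tkey S ≤ tkey S') : S'.card ≤ S.card := by
  by_contra hc
  push_neg at hc
  have h1 : m - S'.card < m - S.card := by
    have := card_le_m (S := S')
    omega
  have := key_arith1 (min'_lt hS') h1 (s := (S.min' hS).val)
  rw [tkey_of_nonempty hS, tkey_of_nonempty hS'] at h
  omega

lemma tkey_card_lt {S S' : Finset (Fin m)} (hS : S.Nonempty) (hS' : S'.Nonempty)
    (h : S'.card < S.card) : tkey S < tkey S' := by
  rw [tkey_of_nonempty hS, tkey_of_nonempty hS']
  exact key_arith1 (min'_lt hS) (by have := card_le_m (S := S); omega)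

lemma tkey_min_lt {S S' : Finset (Fin m)} (hS : S.Nonempty) (hS' : S'.Nonempty)
    (hcard : S.card = S'.card) (h : tkey S < tkey S') :
    (S.min' hS).val < (S'.min' hS').val := by
  rw [tkey_of_nonempty hS, tkey_of_nonempty hS', hcard] at h
  omega

lemma tkey_lt_of_min_lt {S S' : Finset (Fin m)} (hS : S.Nonempty) (hS' : S'.Nonempty)
    (hcard : S.card = S'.card) (h : (S.min' hS).val < (S'.min' hS').val) :
    tkey S < tkey S' := by
  rw [tkey_of_nonempty hS, tkey_of_nonempty hS', hcard]
  omega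

lemma tkey_inj {u : Fin m → Fin n} {S S' : Finset (Fin m)} (hS : S ∈ Pu u) (hS' : S' ∈ Pu u)
    (h : tkey S = tkey S') : S = S' := by
  have hSne := Pu_nonempty hS
  have hS'ne := Pu_nonempty hS'
  have hcard : S.card = S'.card :=
    le_antisymm (tkey_card_le hS'ne hSne h.ge) (tkey_card_le hSne hS'ne h.le)
  have hmin : (S.min' hSne).val = (S'.min' hS'ne).val := by
    rw [tkey_of_nonempty hSne, tkey_of_nonempty hS'ne, hcard] at h
    omega
  have hmin' : S.min' hSne = S'.min' hS'ne := Fin.ext hmin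
  rw [Pu_eq_of_mem hS (S.min'_mem hSne), Pu_eq_of_mem hS' (S'.min'_mem hS'ne), hmin']

lemma strictMono_of_consec {D : ℕ} {f : Fin D → ℕ}
    (h : ∀ (d : Fin D) (hd : d.val + 1 < D), f d < f ⟨d.val + 1, hd⟩) : StrictMono f := by
  have key : ∀ (k : ℕ) (a b : Fin D), b.val = a.val + (k + 1) → f a < f b := by
    intro k
    induction k with
    | zero =>
      intro a b hab
      have hblt := b.isLt
      have hd : a.val + 1 < D := by omega
      have hb : b = ⟨a.val + 1, hd⟩ := Fin.ext (show b.val = a.val + 1 by omega)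
      rw [hb]
      exact h a hd
    | succ k ih =>
      intro a b hab
      have hblt := b.isLt
      have hd1 : a.val + (k + 1) < D := by omega
      have step1 := ih a ⟨a.val + (k + 1), hd1⟩ rfl
      have hd2 : a.val + (k + 1) + 1 < D := by omega
      have step2 := h ⟨a.val + (k + 1), hd1⟩ hd2
      have hb : b = ⟨a.val + (k + 1) + 1, hd2⟩ := Fin.ext (show b.val = a.val + (k+1) + 1 by omega)
      rw [hb]
      exact lt_trans step1 step2
  intro a b hab
  exact key (b.val - a.val - 1) a b (by have := (Fin.lt_iff_val_lt_val).mp hab; omega)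

end Tableau

section Struct

variable {n m D : ℕ}

lemma uT_eq (hn : 0 < n) (hDn : D ≤ n) {rows : Fin D → Finset (Fin m)}
    (hpart : ∀ ℓ : Fin m, ∃! d, ℓ ∈ rows d) {ℓ : Fin m} {d : Fin D} (hld : ℓ ∈ rows d) :
    uT n hn rows ℓ = ⟨d.val, lt_of_lt_of_le d.isLt hDn⟩ := by
  have hex : ∃ d, ℓ ∈ rows d := ⟨d, hld⟩
  simp only [uT, dif_pos hex]
  have hch : Classical.choose hex = d := (hpart ℓ).unique (Classical.choose_spec hex) hld
  apply Fin.ext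
  show (Classical.choose hex).val % n = d.val
  rw [hch]
  exact Nat.mod_eq_of_lt (lt_of_lt_of_le d.isLt hDn)

lemma val_on_row (hn : 0 < n) (hDn : D ≤ n) {u : Fin m → Fin n}
    {rows : Fin D → Finset (Fin m)} (hpart : ∀ ℓ : Fin m, ∃! d, ℓ ∈ rows d)
    {g : Equiv.Perm (Fin n)} (hu : (fun ℓ => g⁻¹ (uT n hn rows ℓ)) = u)
    {ℓ : Fin m} {d : Fin D} (hld : ℓ ∈ rows d) :
    g⁻¹ ⟨d.val, lt_of_lt_of_le d.isLt hDn⟩ = u ℓ := by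
  have := congrFun hu ℓ
  rwa [uT_eq hn hDn hpart hld] at this

lemma rows_level (hn : 0 < n) (hDn : D ≤ n) {u : Fin m → Fin n}
    {rows : Fin D → Finset (Fin m)} (hpart : ∀ ℓ : Fin m, ∃! d, ℓ ∈ rows d)
    {g : Equiv.Perm (Fin n)} (hu : (fun ℓ => g⁻¹ (uT n hn rows ℓ)) = u) (d : Fin D) :
    rows d = levelSet u (g⁻¹ ⟨d.val, lt_of_lt_of_le d.isLt hDn⟩) := by
  ext ℓ
  rw [mem_levelSet]
  constructor
  · intro hld
    exact (val_on_row hn hDn hpart hu hld).symm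
  · intro hval
    obtain ⟨d', hd'⟩ := (hpart ℓ).exists
    have h1 := val_on_row hn hDn hpart hu hd'
    have h2 : d = d' := by
      have h3 := g⁻¹.injective (hval.symm.trans h1.symm)
      have h4 : d.val = d'.val := by simpa using h3
      exact Fin.ext h4
    rwa [h2]

lemma rows_mem_Pu (hn : 0 < n) (hDn : D ≤ n) {u : Fin m → Fin n}
    {rows : Fin D → Finset (Fin m)} (hne : ∀ d, (rows d).Nonempty)
    (hpart : ∀ ℓ : Fin m, ∃! d, ℓ ∈ rows d)
    {g : Equiv.Perm (Fin n)} (hu : (fun ℓ => g⁻¹ (uT n hn rows ℓ)) = u) (d : Fin D) :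
    rows d ∈ Pu u := by
  obtain ⟨ℓ, hℓ⟩ := hne d
  rw [mem_Pu]
  refine ⟨ℓ, ?_⟩
  rw [rows_level hn hDn hpart hu d]
  congr 1
  exact val_on_row hn hDn hpart hu hℓ

lemma depth_eq (hn : 0 < n) (hDn : D ≤ n) {u : Fin m → Fin n}
    {rows : Fin D → Finset (Fin m)} (hne : ∀ d, (rows d).Nonempty)
    (hpart : ∀ ℓ : Fin m, ∃! d, ℓ ∈ rows d)
    {g : Equiv.Perm (Fin n)} (hu : (fun ℓ => g⁻¹ (uT n hn rows ℓ)) = u) :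
    D = (Pu u).card := by
  have := Finset.card_bij (s := (Finset.univ : Finset (Fin D))) (t := Pu u)
    (fun d _ => rows d)
    (fun d _ => rows_mem_Pu hn hDn hne hpart hu d)
    (fun d _ d' _ heq => by
      obtain ⟨ℓ, hℓ⟩ := hne d
      exact ((hpart ℓ).unique hℓ (heq ▸ hℓ)))
    (fun S hS => by
      obtain ⟨ℓ, rfl⟩ := mem_Pu.mp hS
      obtain ⟨d, hd⟩ := (hpart ℓ).exists
      refine ⟨d, Finset.mem_univ _, ?_⟩
      rw [rows_level hn hDn hpart hu d]
      congr 1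
      exact val_on_row hn hDn hpart hu hd)
  simpa using this

lemma min_lt_iff_min'_lt {S S' : Finset (Fin m)} (hS : S.Nonempty) (hS' : S'.Nonempty) :
    S.min < S'.min ↔ (S.min' hS).val < (S'.min' hS').val := by
  rw [← Finset.coe_min' hS, ← Finset.coe_min' hS']
  rw [WithTop.coe_lt_coe]
  exact Fin.lt_iff_val_lt_val

lemma tableau_tkey_strictMono {u : Fin m → Fin n} {rows : Fin D → Finset (Fin m)}
    (htab : IsBasisTableau rows) (hPu : ∀ d, rows d ∈ Pu u) :
    StrictMono (fun d => tkey (rows d)) := by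
  obtain ⟨hne, hpart, hcard, hmin⟩ := htab
  apply strictMono_of_consec
  intro d hd
  rcases Nat.lt_or_ge (rows ⟨d.val + 1, hd⟩).card (rows d).card with hc | hc
  · exact tkey_card_lt (hne _) (hne _) hc
  · have hceq : (rows d).card = (rows ⟨d.val + 1, hd⟩).card :=
      le_antisymm hc (hcard d ⟨d.val + 1, hd⟩ (Fin.le_def.mpr (by omega : d.val ≤ d.val + 1)))
    have := hmin d hd hceq
    rw [min_lt_iff_min'_lt (hne _) (hne _)] at this
    exact tkey_lt_of_min_lt (hne _) (hne _) hceq this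

end Struct

lemma mem_TabFin {m D : ℕ} {rows : Fin D → Finset (Fin m)} :
    rows ∈ TabFin m D ↔ IsBasisTableau rows := Set.Finite.mem_toFinset _

lemma mem_HDfin {n D : ℕ} {g : Equiv.Perm (Fin n)} :
    g ∈ HDfin n D ↔ g ∈ HD n D := Set.Finite.mem_toFinset _

lemma master {m n : ℕ} (hm : 1 ≤ m) (hmn : m ≤ n) (hn : 0 < n) (u : Fin m → Fin n) :
    ∃ D, D ∈ Finset.Icc 1 m ∧ ∃ rows ∈ TabFin m D, ∃ g ∈ HDfin n D,
      ((fun ℓ => g⁻¹ (uT n hn rows ℓ)) = u) ∧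
      (∀ D', D' ∈ Finset.Icc 1 m → ∀ rows' ∈ TabFin m D', ∀ g' ∈ HDfin n D',
        (fun ℓ => g'⁻¹ (uT n hn rows' ℓ)) = u → D' = D) ∧
      (∀ rows' ∈ TabFin m D, ∀ g' ∈ HDfin n D,
        (fun ℓ => g'⁻¹ (uT n hn rows' ℓ)) = u → rows' = rows ∧ g' = g) := by
  classical
  set D₀ := (Pu u).card with hD₀
  have hPune : (Pu u).Nonempty := ⟨levelSet u (u ⟨0, hm⟩), mem_Pu.mpr ⟨⟨0, hm⟩, rfl⟩⟩
  have hD₀1 : 1 ≤ D₀ := Finset.card_pos.mpr hPune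
  have hD₀m : D₀ ≤ m := by
    have hinj : Set.InjOn (fun S => if h : S.Nonempty then S.min' h else ⟨0, hm⟩)
        ((Pu u) : Set (Finset (Fin m))) := by
      intro S hS S' hS' hminq
      rw [Finset.mem_coe] at hS hS'
      have hSne := Pu_nonempty hS
      have hS'ne := Pu_nonempty hS'
      simp only [dif_pos hSne, dif_pos hS'ne] at hminq
      rw [Pu_eq_of_mem hS (S.min'_mem hSne), Pu_eq_of_mem hS' (S'.min'_mem hS'ne), hminq]
    have := Finset.card_le_card_of_injOn _ (fun S _ => Finset.mem_univ _) hinj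
    simpa using this
  have hD₀n : D₀ ≤ n := le_trans hD₀m hmn
  have hKinj : Set.InjOn tkey ((Pu u) : Set (Finset (Fin m))) :=
    fun S hS S' hS' h => tkey_inj (Finset.mem_coe.mp hS) (Finset.mem_coe.mp hS') h
  set K := (Pu u).image tkey with hKdef
  have hKcard : K.card = D₀ := Finset.card_image_of_injOn hKinj
  set emb := K.orderEmbOfFin hKcard with hembdef
  have hembK : ∀ d, emb d ∈ K := fun d => Finset.orderEmbOfFin_mem K hKcard d
  have hrowex : ∀ d : Fin D₀, ∃ S, S ∈ Pu u ∧ tkey S = emb d := by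
    intro d
    obtain ⟨S, hS, hSk⟩ := Finset.mem_image.mp (hembK d)
    exact ⟨S, hS, hSk⟩
  choose rows₀ hrows₀P hrows₀k using hrowex
  have hne : ∀ d, (rows₀ d).Nonempty := fun d => Pu_nonempty (hrows₀P d)
  have hembinj : Function.Injective fun d => emb d := (K.orderEmbOfFin hKcard).injective
  have hrows₀inj : ∀ d d', rows₀ d = rows₀ d' → d = d' := by
    intro d d' h
    apply hembinj
    show emb d = emb d'
    rw [← hrows₀k d, ← hrows₀k d', h]
  have hcover : ∀ ℓ : Fin m, ∃ d, ℓ ∈ rows₀ d := by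
    intro ℓ
    have hS : levelSet u (u ℓ) ∈ Pu u := mem_Pu.mpr ⟨ℓ, rfl⟩
    have hmem : tkey (levelSet u (u ℓ)) ∈ K := Finset.mem_image_of_mem _ hS
    have hrange := Finset.range_orderEmbOfFin K hKcard
    have hmem2 : tkey (levelSet u (u ℓ)) ∈ Set.range (K.orderEmbOfFin hKcard) := by
      rw [hrange]; exact_mod_cast hmem
    obtain ⟨d, hd⟩ := hmem2
    refine ⟨d, ?_⟩
    have heq : rows₀ d = levelSet u (u ℓ) :=
      hKinj (Finset.mem_coe.mpr (hrows₀P d)) (Finset.mem_coe.mpr hS) (by rw [hrows₀k d, ← hd])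
    rw [heq]
    exact mem_levelSet.mpr rfl
  have hpart : ∀ ℓ : Fin m, ∃! d, ℓ ∈ rows₀ d := by
    intro ℓ
    obtain ⟨d, hd⟩ := hcover ℓ
    refine ⟨d, hd, ?_⟩
    intro d' hd'
    apply hrows₀inj
    rw [Pu_eq_of_mem (hrows₀P d') hd', Pu_eq_of_mem (hrows₀P d) hd]
  have hsm : StrictMono fun d => emb d := (K.orderEmbOfFin hKcard).strictMono
  have htab : IsBasisTableau rows₀ := by
    refine ⟨hne, hpart, ?_, ?_⟩
    · intro d d' hdd'
      apply tkey_card_le (hne d) (hne d')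
      rw [hrows₀k d, hrows₀k d']
      exact hsm.monotone hdd'
    · intro d hd hcards
      have hlt : emb d < emb ⟨d.val + 1, hd⟩ :=
        hsm (Fin.lt_def.mpr (by omega : d.val < d.val + 1))
      have hk : tkey (rows₀ d) < tkey (rows₀ ⟨d.val + 1, hd⟩) := by
        rw [hrows₀k, hrows₀k]; exact hlt
      have := tkey_min_lt (hne d) (hne _) hcards hk
      exact (min_lt_iff_min'_lt (hne d) (hne _)).mpr this
  have htabfin : rows₀ ∈ TabFin m D₀ := mem_TabFin.mpr htab
  set v : Fin D₀ → Fin n := fun d => u ((rows₀ d).min' (hne d)) with hv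
  have hrow_level : ∀ d, rows₀ d = levelSet u (v d) :=
    fun d => Pu_eq_of_mem (hrows₀P d) ((rows₀ d).min'_mem (hne d))
  have hvinj : Function.Injective v := by
    intro d d' h
    apply hrows₀inj
    rw [hrow_level d, hrow_level d', h]
  obtain ⟨g₀, hg₀HD, hg₀spec⟩ := HD_exists hD₀n v hvinj
  have hg₀fin : g₀ ∈ HDfin n D₀ := mem_HDfin.mpr hg₀HD
  have hval : ∀ {ℓ : Fin m} {d : Fin D₀}, ℓ ∈ rows₀ d → u ℓ = v d := by
    intro ℓ d hℓ
    exact mem_levelSet.mp (hrow_level d ▸ hℓ)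
  have hu₀ : (fun ℓ => g₀⁻¹ (uT n hn rows₀ ℓ)) = u := by
    funext ℓ
    obtain ⟨d, hd⟩ := hcover ℓ
    show g₀⁻¹ (uT n hn rows₀ ℓ) = u ℓ
    rw [uT_eq hn hD₀n hpart hd, hg₀spec d.val d.isLt, Fin.eta]
    exact (hval hd).symm
  refine ⟨D₀, Finset.mem_Icc.mpr ⟨hD₀1, hD₀m⟩, rows₀, htabfin, g₀, hg₀fin, hu₀, ?_, ?_⟩
  · intro D' hD' rows' hrows' g' hg' hu'
    rw [Finset.mem_Icc] at hD'
    have htab' : IsBasisTableau rows' := mem_TabFin.mp hrows'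
    exact depth_eq hn (le_trans hD'.2 hmn) htab'.1 htab'.2.1 hu'
  · intro rows' hrows' g' hg' hu'
    have htab' : IsBasisTableau rows' := mem_TabFin.mp hrows'
    have hg'HD : g' ∈ HD n D₀ := mem_HDfin.mp hg'
    have hPu' : ∀ d, rows' d ∈ Pu u := rows_mem_Pu hn hD₀n htab'.1 htab'.2.1 hu'
    have hsm' : StrictMono (fun d => tkey (rows' d)) := tableau_tkey_strictMono htab' hPu'
    have hfs : ∀ d, tkey (rows' d) ∈ K := fun d => Finset.mem_image_of_mem _ (hPu' d)
    have hfeq : (fun d => tkey (rows' d)) = fun d => emb d :=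
      Finset.orderEmbOfFin_unique hKcard hfs hsm'
    have hrowseq : rows' = rows₀ := by
      funext d
      apply hKinj (Finset.mem_coe.mpr (hPu' d)) (Finset.mem_coe.mpr (hrows₀P d))
      rw [hrows₀k d, ← congrFun hfeq d]
    subst hrowseq
    refine ⟨rfl, ?_⟩
    apply HD_unique hD₀n hg'HD hg₀HD
    intro d hd
    obtain ⟨ℓ, hℓ⟩ := htab'.1 ⟨d, hd⟩
    have h1 := val_on_row hn hD₀n htab'.2.1 hu' hℓ
    have h2 := val_on_row hn hD₀n htab'.2.1 hu₀ hℓ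
    exact h1.trans h2.symm

lemma count_one {m n : ℕ} (hm : 1 ≤ m) (hmn : m ≤ n) (hn : 0 < n) (u : Fin m → Fin n) :
    ∑ D ∈ Finset.Icc 1 m, ∑ rows ∈ TabFin m D,
      ((HDfin n D).filter fun g => (fun ℓ => g⁻¹ (uT n hn rows ℓ)) = u).card = 1 := by
  classical
  obtain ⟨D₀, hD₀, rows₀, hrows₀, g₀, hg₀, hu₀, huniqD, huniqR⟩ := master hm hmn hn u
  rw [Finset.sum_eq_single_of_mem D₀ hD₀]
  · rw [Finset.sum_eq_single_of_mem rows₀ hrows₀]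
    · rw [Finset.card_eq_one]
      refine ⟨g₀, ?_⟩
      ext g'
      simp only [Finset.mem_filter, Finset.mem_singleton]
      constructor
      · rintro ⟨hg', hu'⟩
        exact (huniqR rows₀ hrows₀ g' hg' hu').2
      · rintro rfl
        exact ⟨hg₀, hu₀⟩
    · intro rows' hrows' hner
      rw [Finset.card_eq_zero, Finset.filter_eq_empty_iff]
      intro g' hg' hu'
      exact hner (huniqR rows' hrows' g' hg' hu').1
  · intro D' hD' hneD
    apply Finset.sum_eq_zero
    intro rows' hrows'
    rw [Finset.card_eq_zero, Finset.filter_eq_empty_iff]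
    intro g' hg' hu'
    exact hneD (huniqD D' hD' rows' hrows' g' hg' hu')


/-- **Representation theorem for equivariant maps (Theorem 1).**
Let `n ≥ m ≥ 1` and let `F : ℝ^{n^ℓ × a} → ℝ^{n^m × b}` be a continuous
`S_n`-equivariant map.  Then there exist continuous maps
`F_T : ℝ^{n^ℓ × a} → ℝ^b`, indexed by basis tableaux `T` of depth `D`
(`1 ≤ D ≤ m`), such that
`F(x) = ∑_{D=1}^m ∑_{T ∈ T_{m,D}} (1/|H_D|) ∑_{g ∈ H_D} g⁻¹ • (F_T(g • x) ⊗ e_T)`;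
in particular each `H_D` is a Reynolds design of `F_T ∘ ê_{T,b}`. -/
theorem equivariant_representation (n l m a b : ℕ) (hm : 1 ≤ m) (hmn : m ≤ n)
    (F : (((Fin l → Fin n) × Fin a) → ℝ) → ((Fin m → Fin n) × Fin b) → ℝ)
    (hcont : Continuous F)
    (hequiv : ∀ (g : Equiv.Perm (Fin n)) x, F (tensorAct g x) = tensorAct g (F x)) :
    ∃ Fc : (D : ℕ) → (Fin D → Finset (Fin m)) →
        (((Fin l → Fin n) × Fin a) → ℝ) → Fin b → ℝ,
      (∀ D rows, Continuous (Fc D rows)) ∧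
      ∀ x, F x =
        ∑ D ∈ Finset.Icc 1 m, ∑ rows ∈ TabFin m D,
          (1 / ((HDfin n D).card : ℝ)) •
            ∑ g ∈ HDfin n D,
              tensorAct g⁻¹
                (vTensor (Fc D rows (tensorAct g x))
                  (uT n (lt_of_lt_of_le hm hmn) rows)) := by
  classical
  refine ⟨fun D rows x β => ((HDfin n D).card : ℝ) *
      F x (uT n (lt_of_lt_of_le hm hmn) rows, β), ?_, ?_⟩
  · intro D rows
    apply continuous_pi
    intro β
    exact continuous_const.mul ((continuous_apply _).comp hcont)
  · intro x
    funext p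
    have hn : 0 < n := lt_of_lt_of_le hm hmn
    have key : ∀ (D : ℕ) (rows : Fin D → Finset (Fin m)) (g : Equiv.Perm (Fin n)),
        tensorAct g⁻¹
            (vTensor (fun β => ((HDfin n D).card : ℝ) *
                F (tensorAct g x) (uT n (lt_of_lt_of_le hm hmn) rows, β))
              (uT n (lt_of_lt_of_le hm hmn) rows)) p
          = if (fun ℓ => g⁻¹ (uT n (lt_of_lt_of_le hm hmn) rows ℓ)) = p.1 then
              ((HDfin n D).card : ℝ) * F x p else 0 := by
      intro D rows g
      rw [hequiv g x]
      show (if (fun k => (g⁻¹)⁻¹ (p.1 k)) = uT n (lt_of_lt_of_le hm hmn) rows then (1:ℝ) else 0) *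
          (((HDfin n D).card : ℝ) *
            (tensorAct g (F x)) (uT n (lt_of_lt_of_le hm hmn) rows, p.2)) = _
      have hg : ⇑(g⁻¹)⁻¹ = ⇑g := by rw [inv_inv]
      have hiff : ((fun k => (g⁻¹)⁻¹ (p.1 k)) = uT n (lt_of_lt_of_le hm hmn) rows) ↔
          ((fun ℓ => g⁻¹ (uT n (lt_of_lt_of_le hm hmn) rows ℓ)) = p.1) := by
        rw [hg]
        constructor
        · intro h
          funext k
          rw [← h]
          simp
        · intro h
          funext k
          rw [← h]
          simp
      rw [if_congr hiff rfl rfl]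
      by_cases hc : (fun ℓ => g⁻¹ (uT n (lt_of_lt_of_le hm hmn) rows ℓ)) = p.1
      · rw [if_pos hc, if_pos hc, one_mul]
        congr 1
        show F x (fun k => g⁻¹ (uT n (lt_of_lt_of_le hm hmn) rows k), p.2) = F x p
        rw [hc]
      · rw [if_neg hc, if_neg hc, zero_mul]
    symm
    rw [Finset.sum_apply]
    have step : ∀ D ∈ Finset.Icc 1 m,
        (∑ rows ∈ TabFin m D, (1 / ((HDfin n D).card : ℝ)) •
            ∑ g ∈ HDfin n D,
              tensorAct g⁻¹
                (vTensor (fun β => ((HDfin n D).card : ℝ) *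
                    F (tensorAct g x) (uT n (lt_of_lt_of_le hm hmn) rows, β))
                  (uT n (lt_of_lt_of_le hm hmn) rows))) p
          = ∑ rows ∈ TabFin m D,
              (((HDfin n D).filter fun g =>
                  (fun ℓ => g⁻¹ (uT n (lt_of_lt_of_le hm hmn) rows ℓ)) = p.1).card : ℝ)
                * F x p := by
      intro D hD
      rw [Finset.sum_apply]
      apply Finset.sum_congr rfl
      intro rows _
      rw [Pi.smul_apply, Finset.sum_apply]
      have hcard0 : ((HDfin n D).card : ℝ) ≠ 0 := by
        have h1 : (1 : Equiv.Perm (Fin n)) ∈ HDfin n D := mem_HDfin.mpr (one_mem_HD n D)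
        have hpos : 0 < (HDfin n D).card := Finset.card_pos.mpr ⟨1, h1⟩
        exact Nat.cast_ne_zero.mpr (Nat.pos_iff_ne_zero.mp hpos)
      have hsum : (∑ g ∈ HDfin n D,
          tensorAct g⁻¹
            (vTensor (fun β => ((HDfin n D).card : ℝ) *
                F (tensorAct g x) (uT n (lt_of_lt_of_le hm hmn) rows, β))
              (uT n (lt_of_lt_of_le hm hmn) rows)) p)
          = (((HDfin n D).filter fun g =>
              (fun ℓ => g⁻¹ (uT n (lt_of_lt_of_le hm hmn) rows ℓ)) = p.1).card : ℝ)
            * (((HDfin n D).card : ℝ) * F x p) := by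
        rw [Finset.sum_congr rfl (fun g _ => key D rows g)]
        rw [← Finset.sum_filter]
        rw [Finset.sum_const, nsmul_eq_mul]
      have habc : ∀ (c k A : ℝ), c ≠ 0 → 1/c * (k * (c * A)) = k * A := by
        intro c k A hc
        field_simp
      rw [hsum, smul_eq_mul]
      exact habc _ _ _ hcard0
    rw [Finset.sum_congr rfl step]
    have : ∑ D ∈ Finset.Icc 1 m, ∑ rows ∈ TabFin m D,
        (((HDfin n D).filter fun g =>
            (fun ℓ => g⁻¹ (uT n (lt_of_lt_of_le hm hmn) rows ℓ)) = p.1).card : ℝ) * F x p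
        = (∑ D ∈ Finset.Icc 1 m, ∑ rows ∈ TabFin m D,
            (((HDfin n D).filter fun g =>
                (fun ℓ => g⁻¹ (uT n (lt_of_lt_of_le hm hmn) rows ℓ)) = p.1).card : ℝ)) * F x p := by
      rw [Finset.sum_mul]
      apply Finset.sum_congr rfl
      intro D _
      rw [Finset.sum_mul]
    rw [this]
    have hone := count_one hm hmn (lt_of_lt_of_le hm hmn) p.1
    have : (∑ D ∈ Finset.Icc 1 m, ∑ rows ∈ TabFin m D,
        (((HDfin n D).filter fun g =>
            (fun ℓ => g⁻¹ (uT n (lt_of_lt_of_le hm hmn) rows ℓ)) = p.1).card : ℝ)) = 1 := by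
      have hcast := congrArg (fun t : ℕ => (t : ℝ)) hone
      simp only [Nat.cast_sum, Nat.cast_one] at hcast
      exact hcast
    rw [this, one_mul]
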